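/- The principal branch W₀ of the Lambert W function satisfies W₀(t) - (log t - log (log t)) → 0 as t → ∞. -/

import Mathlib

open Real Filter

theorem lambertW_asymptotic (W : ℝ → ℝ)
    (hW : ∀ t : ℝ, 0 < t → 0 ≤ W t ∧ W t * Real.exp (W t) = t) :
    Tendsto (fun t => W t - (Real.log t - Real.log (Real.log t))) atTop (nhds 0) := by
  have hWtop : Tendsto W atTop atTop := by
    rw [tendsto_atTop]
    intro b
    filter_upwards [eventually_gt_atTop (max 0 b * Real.exp (max 0 b)),
      eventually_gt_atTop 0] with t ht ht0
    by_contra h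
    push_neg at h
    obtain ⟨hW0, hWe⟩ := hW t ht0
    have h1 : W t ≤ max 0 b := le_trans h.le (le_max_right _ _)
    have h2 : W t * Real.exp (W t) ≤ max 0 b * Real.exp (max 0 b) :=
      mul_le_mul h1 (Real.exp_le_exp.2 h1) (Real.exp_pos _).le (le_max_left _ _)
    rw [hWe] at h2
    linarith
  have hg : Tendsto (fun x : ℝ => Real.log (1 + Real.log x / x)) atTop (nhds 0) := by
    have hd : Tendsto (fun x : ℝ => Real.log x / x) atTop (nhds 0) := by
      simpa using Real.isLittleO_log_id_atTop.tendsto_div_nhds_zero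
    have h1 : Tendsto (fun x : ℝ => 1 + Real.log x / x) atTop (nhds 1) := by
      simpa using tendsto_const_nhds.add hd
    have := (Real.continuousAt_log (by norm_num : (1:ℝ) ≠ 0)).tendsto.comp h1
    simpa [Function.comp_def] using this
  refine (hg.comp hWtop).congr' ?_
  filter_upwards [hWtop.eventually (eventually_ge_atTop 1), eventually_gt_atTop 0] with t hW1 ht0
  obtain ⟨hW0, hWe⟩ := hW t ht0
  have hWpos : 0 < W t := lt_of_lt_of_le one_pos hW1
  have hlogW : 0 ≤ Real.log (W t) := Real.log_nonneg hW1
  have hlt : Real.log t = Real.log (W t) + W t := by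
    have h := Real.log_mul (ne_of_gt hWpos) (Real.exp_ne_zero (W t))
    rw [hWe, Real.log_exp] at h
    exact h
  have hpos : 0 < 1 + Real.log (W t) / W t := by positivity
  have hllt : Real.log (Real.log t) =
      Real.log (W t) + Real.log (1 + Real.log (W t) / W t) := by
    have hfac : Real.log t = W t * (1 + Real.log (W t) / W t) := by
      field_simp
      linarith
    rw [hfac, Real.log_mul (ne_of_gt hWpos) (ne_of_gt hpos)]
  simp only [Function.comp]
  rw [hllt, hlt]
  ring
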